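/- Let k be a field of characteristic ≠ 2 and φ ∈ k[x] a monic quadratic polynomial whose iterates are all separable, with adjusted post-critical orbit (cₙ) ⊂ k×. Suppose that for some n ≥ 1 the classes of c₁, …, cₙ in the 𝔽₂-vector space k×/(k×)² are linearly dependent, i.e., some nonempty product ∏_{i∈I} cᵢ (I ⊆ {1,…,n}) is a square in k. Then the arboreal Galois representation ρ_φ : Gal(k^sep/k) → Aut(T_∞(φ)) is not surjective. -/

import Mathlib

set_option maxHeartbeats 2000000

open Polynomial IntermediateField

/-- The `n`-th iterate `φ⁽ⁿ⁾` of a polynomial `φ`, as a polynomial. -/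
noncomputable def polyIterate {R : Type*} [CommRing R] (φ : Polynomial R) (n : ℕ) :
    Polynomial R :=
  (fun g => g.comp φ)^[n] X

section AuxAdjoin

lemma finrank_adjoin_sq_le {F Ω : Type*} [Field F] [Field Ω] [Algebra F Ω]
    (T : Finset Ω) (h : ∀ t ∈ T, ∃ y : F, algebraMap F Ω y = t ^ 2) :
    FiniteDimensional F (IntermediateField.adjoin F (T : Set Ω)) ∧
    Module.finrank F (IntermediateField.adjoin F (T : Set Ω)) ≤ 2 ^ T.card := by
  classical
  induction T using Finset.induction with
  | empty =>
      rw [Finset.coe_empty, IntermediateField.adjoin_empty]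
      exact ⟨inferInstance, by simp [IntermediateField.finrank_bot]⟩
  | @insert a s ha ih =>
      obtain ⟨hfd, hle⟩ := ih (fun t ht => h t (Finset.mem_insert_of_mem ht))
      set E := IntermediateField.adjoin F (s : Set Ω) with hE
      obtain ⟨y, hy⟩ := h a (Finset.mem_insert_self a s)
      set p : Polynomial E := X ^ 2 - C (algebraMap F E y) with hp
      have hpm : p.Monic := by
        apply Polynomial.monic_X_pow_sub_C _ (by norm_num)
      have hpa : Polynomial.aeval a p = 0 := by
        rw [hp, map_sub, map_pow, Polynomial.aeval_X, Polynomial.aeval_C,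
          ← IsScalarTower.algebraMap_apply F E Ω, hy, sub_self]
      have hint : IsIntegral E a := ⟨p, hpm, hpa⟩
      have hfd2 : FiniteDimensional E E⟮a⟯ := IntermediateField.adjoin.finiteDimensional hint
      have hdeg : Module.finrank E E⟮a⟯ ≤ 2 := by
        rw [IntermediateField.adjoin.finrank hint]
        have hmin := minpoly.degree_le_of_ne_zero E a (hpm.ne_zero) hpa
        have h2 : p.natDegree = 2 := by
          rw [hp]; compute_degree!
        calc (minpoly E a).natDegree ≤ p.natDegree :=
              Polynomial.natDegree_le_natDegree hmin
          _ = 2 := h2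
      have hkey : (IntermediateField.adjoin E ({a} : Set Ω)).restrictScalars F
          = IntermediateField.adjoin F ((insert a s : Finset Ω) : Set Ω) := by
        rw [IntermediateField.adjoin_adjoin_left, Finset.coe_insert, Set.insert_eq,
          Set.union_comm]
      have hfdEa : FiniteDimensional F E⟮a⟯ := FiniteDimensional.trans F E E⟮a⟯
      have htower : Module.finrank F E * Module.finrank E E⟮a⟯ = Module.finrank F E⟮a⟯ :=
        by haveI : Module.Free E E⟮a⟯ := Module.Free.of_divisionRing _ _; exact Module.finrank_mul_finrank F E E⟮a⟯
      rw [← hkey]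
      refine ⟨hfdEa, ?_⟩
      show Module.finrank F E⟮a⟯ ≤ _
      rw [← htower, Finset.card_insert_of_notMem ha, pow_succ]
      exact Nat.mul_le_mul hle hdeg

lemma finrank_adjoin_sq_lt {F Ω : Type*} [Field F] [Field Ω] [Algebra F Ω]
    (T : Finset Ω) (hne : T.Nonempty) (h0 : ∀ t ∈ T, t ≠ 0)
    (h : ∀ t ∈ T, ∃ y : F, algebraMap F Ω y = t ^ 2)
    (hprod : ∃ z : F, algebraMap F Ω z = ∏ t ∈ T, t) :
    FiniteDimensional F (IntermediateField.adjoin F (T : Set Ω)) ∧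
    Module.finrank F (IntermediateField.adjoin F (T : Set Ω)) ≤ 2 ^ (T.card - 1) := by
  classical
  obtain ⟨a, haT⟩ := hne
  obtain ⟨z, hz⟩ := hprod
  set s := T.erase a with hs
  have hTs : T = insert a s := by rw [hs, Finset.insert_erase haT]
  have hprod' : (∏ t ∈ T, t) = a * ∏ t ∈ s, t := by
    rw [hTs, Finset.prod_insert (Finset.notMem_erase a T)]
  have hsne : (∏ t ∈ s, t) ≠ 0 :=
    Finset.prod_ne_zero_iff.mpr fun t ht => h0 t (hTs ▸ Finset.mem_insert_of_mem ht)
  have hmem : a ∈ IntermediateField.adjoin F (s : Set Ω) := by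
    have h1 : a = algebraMap F Ω z * (∏ t ∈ s, t)⁻¹ := by
      rw [hz, hprod']
      field_simp
    rw [h1]
    refine mul_mem (IntermediateField.algebraMap_mem _ z) (inv_mem (prod_mem fun t ht => ?_))
    exact IntermediateField.subset_adjoin F _ ht
  have hadj : IntermediateField.adjoin F ((T : Set Ω)) = IntermediateField.adjoin F (s : Set Ω) := by
    rw [hTs, Finset.coe_insert]
    refine le_antisymm (IntermediateField.adjoin_le_iff.mpr ?_)
      (IntermediateField.adjoin.mono _ _ _ (Set.subset_insert _ _))
    exact Set.insert_subset hmem (IntermediateField.subset_adjoin F _)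
  have hcard : s.card = T.card - 1 := by rw [hs, Finset.card_erase_of_mem haT]
  rw [hadj, ← hcard]
  exact finrank_adjoin_sq_le s (fun t ht => h t (hTs ▸ Finset.mem_insert_of_mem ht))

end AuxAdjoin

section AuxIterate

variable {k : Type*} [Field k] {γ c₁ : k} {φ : Polynomial k}

lemma polyIterate_zero : polyIterate φ 0 = X := rfl

lemma polyIterate_succ (m : ℕ) : polyIterate φ (m + 1) = (polyIterate φ m).comp φ := by
  unfold polyIterate
  rw [Function.iterate_succ_apply']

lemma phi_monic (hφ : φ = (X - C γ) ^ 2 - C c₁) : φ.Monic := by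
  have h1 : ((X - C γ) ^ 2 : k[X]).Monic := (monic_X_sub_C γ).pow 2
  rw [hφ, sub_eq_add_neg]
  refine h1.add_of_left ?_
  have h2 : ((X - C γ) ^ 2 : k[X]).degree = 2 := by
    rw [degree_pow, degree_X_sub_C]; rfl
  rw [h2, degree_neg]
  exact lt_of_le_of_lt (degree_C_le) (by norm_num)

lemma phi_natDegree (hφ : φ = (X - C γ) ^ 2 - C c₁) : φ.natDegree = 2 := by
  rw [hφ, natDegree_sub_C, natDegree_pow, natDegree_X_sub_C, mul_one]

lemma polyIterate_monic (hφ : φ = (X - C γ) ^ 2 - C c₁) (m : ℕ) :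
    (polyIterate φ m).Monic := by
  induction m with
  | zero => exact monic_X
  | succ m ih =>
      rw [polyIterate_succ]
      exact ih.comp (phi_monic hφ) (by rw [phi_natDegree hφ]; norm_num)

lemma polyIterate_natDegree (hφ : φ = (X - C γ) ^ 2 - C c₁) (m : ℕ) :
    (polyIterate φ m).natDegree = 2 ^ m := by
  induction m with
  | zero => simp [polyIterate_zero]
  | succ m ih =>
      rw [polyIterate_succ, natDegree_comp, ih, phi_natDegree hφ, pow_succ]

lemma aeval_polyIterate {Ω : Type*} [CommRing Ω] [Algebra k Ω]
    (hφ : φ = (X - C γ) ^ 2 - C c₁) (m : ℕ) (x : Ω) :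
    aeval x (polyIterate φ m) =
      (fun t => (t - algebraMap k Ω γ) ^ 2 - algebraMap k Ω c₁)^[m] x := by
  induction m generalizing x with
  | zero => simp [polyIterate_zero]
  | succ m ih =>
      rw [polyIterate_succ, aeval_comp, ih, Function.iterate_succ_apply]
      congr 1
      rw [hφ]
      simp

lemma prod_aroots_add {Ω : Type*} [Field Ω] [Algebra k Ω] [IsAlgClosed Ω] [DecidableEq Ω]
    (hφ : φ = (X - C γ) ^ 2 - C c₁) {m : ℕ} (hm : 1 ≤ m)
    (hsepm : (polyIterate φ m).Separable) :
    ∏ β ∈ ((polyIterate φ m).aroots Ω).toFinset, (β + algebraMap k Ω c₁)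
      = algebraMap k Ω ((fun x => (x - γ) ^ 2 - c₁)^[m] (-c₁)) := by
  classical
  set A := algebraMap k Ω with hA
  set P : Polynomial Ω := (polyIterate φ m).map A with hP
  have hmonic : P.Monic := (polyIterate_monic hφ m).map A
  have hsplits : P.Splits := IsAlgClosed.splits P
  have hfact : P = (P.roots.map fun a => X - C a).prod :=
    hsplits.eq_prod_roots_of_monic hmonic
  have hnodup : P.roots.Nodup := Polynomial.nodup_roots (hsepm.map (f := A))
  have hcard : Multiset.card P.roots = 2 ^ m := by
    rw [← (IsAlgClosed.splits P).natDegree_eq_card_roots, hP, natDegree_map,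
      polyIterate_natDegree hφ]
  have haroots : (polyIterate φ m).aroots Ω = P.roots := rfl
  have h1 : ∏ β ∈ P.roots.toFinset, (β + A c₁) = (P.roots.map (fun β => β + A c₁)).prod := by
    rw [Finset.prod_eq_multiset_prod, Multiset.toFinset_val, Multiset.dedup_eq_self.mpr hnodup]
  have h2 : eval (-A c₁) P = (P.roots.map (fun β => -A c₁ - β)).prod := by
    conv_lhs => rw [hfact]
    rw [eval_multiset_prod, Multiset.map_map]
    congr 1
    apply Multiset.map_congr rfl
    intro x _
    simp
  have h3 : (P.roots.map (fun β => -A c₁ - β)).prod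
      = (-1 : Ω) ^ (2 ^ m) * (P.roots.map (fun β => β + A c₁)).prod := by
    have he : (fun β : Ω => -A c₁ - β) = fun β => (-1) * (β + A c₁) := by funext β; ring
    rw [he, Multiset.prod_map_mul]
    congr 1
    rw [Multiset.map_const', Multiset.prod_replicate, hcard]
  have heven : (-1 : Ω) ^ (2 ^ m) = 1 := by
    refine Even.neg_one_pow ⟨2 ^ (m - 1), ?_⟩
    have : m - 1 + 1 = m := by omega
    rw [← two_mul, ← pow_succ', this]
  have h4 : eval (-A c₁) P = A (eval (-c₁) (polyIterate φ m)) := by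
    rw [hP, ← map_neg, eval_map, eval₂_at_apply]
  have h5 : eval (-c₁) (polyIterate φ m) = (fun x => (x - γ) ^ 2 - c₁)^[m] (-c₁) := by
    have := aeval_polyIterate (Ω := k) hφ m (-c₁)
    simpa using this
  rw [haroots, h1, ← h5, ← h4, h2, h3, heven, one_mul]

end AuxIterate

/-- one direction of Stoll's criterion: Let `k` have characteristic ≠ 2 and
`φ = (x - γ)² - c₁ ∈ k[x]` be monic quadratic with all iterates separable and adjusted
post-critical orbit `(cₙ) ⊂ k×`.  If for some `n ≥ 1` the classes of `c₁, …, cₙ` in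
`k×/(k×)²` are linearly dependent over `𝔽₂` (some nonempty subproduct is a square in `k`),
then the arboreal representation `ρ_φ` is not surjective: for some level `N` the Galois
group of the splitting field `K_N` of `φ⁽ᴺ⁾` over `k` is smaller than
`Aut(T_N) = 2^(2^N - 1)`. -/
theorem stmt_19 {k : Type*} [Field k] (hchar : (2 : k) ≠ 0)
    (γ c₁ : k)
    (φ : Polynomial k) (hφ : φ = (X - C γ) ^ 2 - C c₁)
    (hsep : ∀ m, 1 ≤ m → (polyIterate φ m).Separable)
    (c : ℕ → k)
    (hc1 : c 1 = c₁)
    (hcn : ∀ m, 2 ≤ m → c m = (fun x => (x - γ) ^ 2 - c₁)^[m] γ)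
    (hnz : ∀ m, 1 ≤ m → c m ≠ 0)
    (n : ℕ) (hn : 1 ≤ n)
    (I : Finset ℕ) (hI : I ⊆ Finset.Icc 1 n) (hIne : I.Nonempty)
    (hsquare : ∃ s : k, s ^ 2 = ∏ i ∈ I, c i) :
    ∃ N, 1 ≤ N ∧
      Nat.card ((polyIterate φ N).SplittingField ≃ₐ[k] (polyIterate φ N).SplittingField) <
        2 ^ (2 ^ N - 1) := by
  classical
  set Ω := AlgebraicClosure k with hΩ
  set A : k →+* Ω := algebraMap k Ω with hA
  set f : k → k := fun x => (x - γ) ^ 2 - c₁ with hf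
  set T : ℕ → Finset Ω := fun m => ((polyIterate φ m).aroots Ω).toFinset with hT
  set L : ℕ → IntermediateField k Ω := fun m =>
    IntermediateField.adjoin k ((T m : Set Ω)) with hL
  have hAinj : Function.Injective A := A.injective
  have hsqrtΩ : ∀ β : Ω, ∃ z : Ω, z ^ 2 = β + A c₁ := fun β =>
    IsAlgClosed.exists_pow_nat_eq _ (by norm_num)
  choose r hr using hsqrtΩ
  -- membership in T m
  have hmem : ∀ m (x : Ω), x ∈ T m ↔ aeval x (polyIterate φ m) = 0 := by
    intro m x
    rw [hT]
    simp [Polynomial.mem_aroots, (polyIterate_monic hφ m).ne_zero]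
  have hstep : ∀ m (x : Ω), aeval x (polyIterate φ (m + 1))
      = aeval (aeval x φ) (polyIterate φ m) := by
    intro m x
    rw [polyIterate_succ, aeval_comp]
  have haevalφ : ∀ x : Ω, aeval x φ = (x - A γ) ^ 2 - A c₁ := by
    intro x; rw [hφ]; simp [hA]
  have hTmem : ∀ m β, β ∈ T m → A γ + r β ∈ T (m + 1) := by
    intro m β hβ
    rw [hmem, hstep, haevalφ]
    have h1 : A γ + r β - A γ = r β := by ring
    rw [h1, hr]
    simpa using (hmem m β).mp hβ
  have hrootφ : ∀ m α, α ∈ T (m + 1) → aeval α φ ∈ T m := by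
    intro m α hα
    rw [hmem]
    rw [hmem, hstep] at hα
    exact hα
  have hTsubL : ∀ m β, β ∈ T m → β ∈ L m := by
    intro m β hβ
    exact IntermediateField.subset_adjoin k _ hβ
  have hrL : ∀ m β, β ∈ T m → r β ∈ L (m + 1) := by
    intro m β hβ
    have h1 : A γ + r β ∈ L (m + 1) := hTsubL _ _ (hTmem m β hβ)
    have h2 : r β = (A γ + r β) - A γ := by ring
    rw [h2]
    exact sub_mem h1 (IntermediateField.algebraMap_mem _ γ)
  have hmono : ∀ m, L m ≤ L (m + 1) := by
    intro m
    rw [hL]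
    refine IntermediateField.adjoin_le_iff.mpr ?_
    intro β hβ
    have hβ' : β ∈ T m := hβ
    have h2 : β = (r β) ^ 2 - A c₁ := by rw [hr]; ring
    rw [h2]
    exact sub_mem (pow_mem (hrL m β hβ') 2) (IntermediateField.algebraMap_mem _ c₁)
  have hmono' : ∀ i j, i ≤ j → L i ≤ L j := by
    intro i j hij
    induction j, hij using Nat.le_induction with
    | base => exact le_refl _
    | succ j hij ih => exact ih.trans (hmono j)
  -- squares condition for image of r
  have hSsq : ∀ m, ∀ t ∈ (T m).image r, ∃ y : ↥(L m), algebraMap (↥(L m)) Ω y = t ^ 2 := by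
    intro m t ht
    obtain ⟨β, hβ, rfl⟩ := Finset.mem_image.mp ht
    refine ⟨⟨β + A c₁, add_mem (hTsubL m β hβ) (IntermediateField.algebraMap_mem _ c₁)⟩, ?_⟩
    rw [hr]
    rfl
  -- adjoin equality
  have hadj : ∀ m, IntermediateField.adjoin (↥(L m)) ((T (m + 1) : Set Ω))
      = IntermediateField.adjoin (↥(L m)) (((T m).image r : Set Ω)) := by
    intro m
    apply le_antisymm
    · refine IntermediateField.adjoin_le_iff.mpr ?_
      intro α hα
      have hα' : α ∈ T (m + 1) := hα
      have hβT : aeval α φ ∈ T m := hrootφ m α hα'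
      set β := aeval α φ with hβ
      have hsq2 : (α - A γ) ^ 2 = (r β) ^ 2 := by
        rw [hr, hβ, haevalφ]; ring
      have hz : (α - A γ - r β) * (α - A γ + r β) = 0 := by linear_combination hsq2
      have hrmem : r β ∈ IntermediateField.adjoin (↥(L m)) (((T m).image r : Set Ω)) :=
        IntermediateField.subset_adjoin _ _ (Finset.mem_image_of_mem r hβT)
      have hγmem : A γ ∈ IntermediateField.adjoin (↥(L m)) (((T m).image r : Set Ω)) := by
        have : A γ ∈ L m := IntermediateField.algebraMap_mem _ γ
        exact IntermediateField.algebraMap_mem _ (⟨A γ, this⟩ : ↥(L m))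
      rcases mul_eq_zero.mp hz with h | h
      · have : α = A γ + r β := by linear_combination h
        rw [this]; exact add_mem hγmem hrmem
      · have : α = A γ - r β := by linear_combination h
        rw [this]; exact sub_mem hγmem hrmem
    · refine IntermediateField.adjoin_le_iff.mpr ?_
      intro t ht
      obtain ⟨β, hβ, rfl⟩ := Finset.mem_image.mp ht
      have h1 : A γ + r β ∈ IntermediateField.adjoin (↥(L m)) ((T (m + 1) : Set Ω)) :=
        IntermediateField.subset_adjoin _ _ (hTmem m β hβ)
      have hγmem : A γ ∈ IntermediateField.adjoin (↥(L m)) ((T (m + 1) : Set Ω)) := by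
        have : A γ ∈ L m := IntermediateField.algebraMap_mem _ γ
        exact IntermediateField.algebraMap_mem _ (⟨A γ, this⟩ : ↥(L m))
      have h2 : r β = (A γ + r β) - A γ := by ring
      rw [h2]
      exact sub_mem h1 hγmem
  -- restrict scalars
  have hLsucc : ∀ m, IntermediateField.restrictScalars k
      (IntermediateField.adjoin (↥(L m)) (((T m).image r : Set Ω))) = L (m + 1) := by
    intro m
    rw [← hadj m, IntermediateField.restrictScalars_adjoin_eq_sup]
    exact sup_eq_right.mpr (hmono m)
  have hfinrank : ∀ m, Module.finrank k ↥(L (m + 1))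
      = Module.finrank k ↥(L m) *
        Module.finrank (↥(L m)) ↥(IntermediateField.adjoin (↥(L m)) (((T m).image r : Set Ω))) := by
    intro m
    have h := Module.finrank_mul_finrank k (↥(L m))
      ↥(IntermediateField.adjoin (↥(L m)) (((T m).image r : Set Ω)))
    rw [← hLsucc m]
    exact h.symm
  have hT0 : T 0 = {0} := by
    rw [hT]
    show ((polyIterate φ 0).aroots Ω).toFinset = {0}
    rw [polyIterate_zero, Polynomial.aroots_def, Polynomial.map_X, Polynomial.roots_X,
      Multiset.toFinset_singleton]
  have hL0 : L 0 = ⊥ := by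
    rw [hL]
    apply le_antisymm
    · refine IntermediateField.adjoin_le_iff.mpr ?_
      intro x hx
      have hx' : x ∈ T 0 := hx
      rw [hT0, Finset.mem_singleton] at hx'
      rw [hx']
      exact zero_mem _
    · exact bot_le
  have hcardT : ∀ m, (T m).card ≤ 2 ^ m := by
    intro m
    rw [hT]
    calc ((polyIterate φ m).aroots Ω).toFinset.card
        ≤ Multiset.card ((polyIterate φ m).aroots Ω) := Multiset.toFinset_card_le _
      _ ≤ ((polyIterate φ m).map A).natDegree := Polynomial.card_roots' _
      _ = (polyIterate φ m).natDegree := Polynomial.natDegree_map A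
      _ = 2 ^ m := polyIterate_natDegree hφ m
  have hP8 : ∀ m, FiniteDimensional k ↥(L m) ∧ Module.finrank k ↥(L m) ≤ 2 ^ (2 ^ m - 1) := by
    intro m
    induction m with
    | zero =>
        rw [hL0]
        constructor
        · infer_instance
        · simp [IntermediateField.finrank_bot]
    | succ m ih =>
        obtain ⟨ihf, ihb⟩ := ih
        have hAs := finrank_adjoin_sq_le (F := ↥(L m)) ((T m).image r) (hSsq m)
        have hfd : FiniteDimensional k ↥(L (m + 1)) := by
          rw [← hLsucc m]
          haveI := ihf
          haveI := hAs.1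
          exact FiniteDimensional.trans k (↥(L m))
            ↥(IntermediateField.adjoin (↥(L m)) (((T m).image r : Set Ω)))
        refine ⟨hfd, ?_⟩
        rw [hfinrank m]
        have hcard : ((T m).image r).card ≤ 2 ^ m :=
          le_trans Finset.card_image_le (hcardT m)
        have h2 : Module.finrank (↥(L m))
            ↥(IntermediateField.adjoin (↥(L m)) (((T m).image r : Set Ω))) ≤ 2 ^ (2 ^ m) :=
          hAs.2.trans (Nat.pow_le_pow_right (by norm_num) hcard)
        calc Module.finrank k ↥(L m) * Module.finrank (↥(L m))
              ↥(IntermediateField.adjoin (↥(L m)) (((T m).image r : Set Ω)))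
            ≤ 2 ^ (2 ^ m - 1) * 2 ^ (2 ^ m) := Nat.mul_le_mul ihb h2
          _ = 2 ^ (2 ^ m - 1 + 2 ^ m) := (pow_add 2 _ _).symm
          _ = 2 ^ (2 ^ (m + 1) - 1) := by
              congr 1
              have h1 : 1 ≤ 2 ^ m := Nat.one_le_two_pow
              have h3 : 2 ^ (m + 1) = 2 ^ m * 2 := pow_succ 2 m
              omega
  -- shift identity
  have hshift : ∀ j, f^[j] (-c₁) = f^[j + 1] γ := by
    intro j
    rw [Function.iterate_succ_apply]
    congr 1
    rw [hf]
    ring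
  have hrinj : ∀ x y : Ω, r x = r y → x = y := by
    intro x y h
    have h1 := hr x
    rw [h, hr y] at h1
    exact (add_right_cancel h1).symm
  have hprodc : ∀ j, ∏ β ∈ T j, (β + A c₁) = A (c (j + 1)) := by
    intro j
    cases j with
    | zero =>
        rw [hT0, Finset.prod_singleton, zero_add, hc1]
    | succ m =>
        have h := prod_aroots_add (Ω := Ω) hφ (show 1 ≤ m + 1 by omega)
          (hsep (m + 1) (by omega))
        rw [← hf] at h
        have hTT : T (m + 1) = ((polyIterate φ (m + 1)).aroots Ω).toFinset := by rw [hT]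
        rw [hTT, h, hcn (m + 2) (by omega), hshift (m + 1)]
  -- choose the level N = M + 1
  have hNI : I.max' hIne ∈ I := I.max'_mem hIne
  have hN1 : 1 ≤ I.max' hIne := (Finset.mem_Icc.mp (hI hNI)).1
  obtain ⟨M, hM⟩ : ∃ M, I.max' hIne = M + 1 := ⟨I.max' hIne - 1, by omega⟩
  -- the square of the product of adjoined square roots
  have hPr2 : (∏ t ∈ (T M).image r, t) ^ 2 = A (c (M + 1)) := by
    rw [← Finset.prod_pow, Finset.prod_image (fun x _ y _ h => hrinj x y h), ← hprodc M]
    exact Finset.prod_congr rfl fun β _ => hr β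
  have hc0 : ∀ i, 1 ≤ i → A (c i) ≠ 0 := by
    intro i hi h
    exact hnz i hi (hAinj (h.trans (map_zero A).symm))
  -- nonvanishing of the adjoined square roots
  have ht0 : ∀ t ∈ (T M).image r, t ≠ 0 := by
    intro t ht h0
    obtain ⟨β, hβ, rfl⟩ := Finset.mem_image.mp ht
    have h1 : β + A c₁ = 0 := by rw [← hr β, h0]; ring
    have hβval : β = A (-c₁) := by rw [map_neg]; exact eq_neg_of_add_eq_zero_left h1
    have h2 : aeval (A (-c₁)) (polyIterate φ M) = 0 := by
      rw [← hβval]; exact (hmem M β).mp hβ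
    rw [Polynomial.aeval_algebraMap_apply] at h2
    have h3 : aeval (-c₁ : k) (polyIterate φ M) = 0 :=
      hAinj (h2.trans (map_zero A).symm)
    have h4 := aeval_polyIterate (Ω := k) hφ M (-c₁)
    simp only [Algebra.algebraMap_self, RingHom.id_apply] at h4
    rw [← hf] at h4
    rw [h4, hshift M] at h3
    cases M with
    | zero =>
        have h5 : f γ = 0 := h3
        rw [hf] at h5
        have h6 : c₁ = 0 := by linear_combination -h5
        exact hnz 1 le_rfl (by rw [hc1]; exact h6)
    | succ m =>
        exact hnz (m + 2) (by omega) (by rw [hcn (m + 2) (by omega)]; exact h3)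
  -- nonemptiness
  have hTneM : (T M).Nonempty := by
    have hdeg : ((polyIterate φ M).map A).degree ≠ 0 := by
      rw [Polynomial.degree_map,
        Polynomial.degree_eq_natDegree (polyIterate_monic hφ M).ne_zero,
        polyIterate_natDegree hφ]
      simp
    obtain ⟨x, hx⟩ := IsAlgClosed.exists_root _ hdeg
    refine ⟨x, ?_⟩
    rw [hmem, Polynomial.aeval_def, ← Polynomial.eval_map]
    exact hx
  have hTne : ((T M).image r).Nonempty := hTneM.image r
  -- the product of the adjoined square roots lies in L M
  have hU : ∃ w : ↥(L M), algebraMap (↥(L M)) Ω w = ∏ t ∈ (T M).image r, t := by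
    have hsqc : ∀ i, 1 ≤ i → i ≤ M → ∃ u : Ω, u ∈ L M ∧ u ^ 2 = A (c i) := by
      intro i h1 h2
      obtain ⟨j, rfl⟩ : ∃ j, i = j + 1 := ⟨i - 1, by omega⟩
      refine ⟨∏ β ∈ T j, r β, ?_, ?_⟩
      · exact hmono' (j + 1) M h2 (prod_mem fun β hβ => hrL j β hβ)
      · rw [← Finset.prod_pow, ← hprodc j]
        exact Finset.prod_congr rfl fun β _ => hr β
    have hex : ∀ i, ∃ u : Ω, i ∈ I.erase (M + 1) → (u ∈ L M ∧ u ^ 2 = A (c i)) := by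
      intro i
      by_cases h : i ∈ I.erase (M + 1)
      · have hiI : i ∈ I := Finset.mem_of_mem_erase h
        have h1 : 1 ≤ i := (Finset.mem_Icc.mp (hI hiI)).1
        have h2 : i ≤ M := by
          have := Finset.le_max' I i hiI
          have hne := Finset.ne_of_mem_erase h
          omega
        obtain ⟨u, hu⟩ := hsqc i h1 h2
        exact ⟨u, fun _ => hu⟩
      · exact ⟨0, fun h' => absurd h' h⟩
    choose u hu using hex
    set U := ∏ i ∈ I.erase (M + 1), u i with hUdef
    have hUL : U ∈ L M := prod_mem fun i hi => (hu i hi).1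
    have hU2 : U ^ 2 = ∏ i ∈ I.erase (M + 1), A (c i) := by
      rw [← Finset.prod_pow]
      exact Finset.prod_congr rfl fun i hi => (hu i hi).2
    have hU0 : U ≠ 0 := by
      intro h0
      have hz : (0 : Ω) = ∏ i ∈ I.erase (M + 1), A (c i) := by
        rw [← hU2, h0]; ring
      have hnz' : (∏ i ∈ I.erase (M + 1), A (c i)) ≠ 0 :=
        Finset.prod_ne_zero_iff.mpr fun i hi =>
          hc0 i (Finset.mem_Icc.mp (hI (Finset.mem_of_mem_erase hi))).1
      exact hnz' hz.symm
    obtain ⟨s, hs⟩ := hsquare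
    set Pr := ∏ t ∈ (T M).image r, t with hPrdef
    have hkey : (Pr * U) ^ 2 = (A s) ^ 2 := by
      rw [mul_pow, hPr2, hU2, ← map_pow, hs, ← Finset.mul_prod_erase I c (hM ▸ hNI), map_mul,
        map_prod]
    have hd : (Pr * U - A s) * (Pr * U + A s) = 0 := by linear_combination hkey
    have hPrL : Pr ∈ L M := by
      rcases mul_eq_zero.mp hd with h | h
      · have hPr : Pr = A s * U⁻¹ := by
          rw [eq_mul_inv_iff_mul_eq₀ hU0]
          linear_combination h
        rw [hPr]
        exact mul_mem (IntermediateField.algebraMap_mem _ s) (inv_mem hUL)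
      · have hPr : Pr = -A s * U⁻¹ := by
          rw [eq_mul_inv_iff_mul_eq₀ hU0]
          linear_combination h
        rw [hPr]
        exact mul_mem (neg_mem (IntermediateField.algebraMap_mem _ s)) (inv_mem hUL)
    exact ⟨⟨Pr, hPrL⟩, rfl⟩
  -- strict bound at level M+1
  have hAslt := finrank_adjoin_sq_lt (F := ↥(L M)) ((T M).image r) hTne ht0 (hSsq M) hU
  have hlt : Module.finrank k ↥(L (M + 1)) < 2 ^ (2 ^ (M + 1) - 1) := by
    rw [hfinrank M]
    have hcard1 : ((T M).image r).card - 1 ≤ 2 ^ M - 1 :=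
      Nat.sub_le_sub_right (le_trans Finset.card_image_le (hcardT M)) 1
    calc Module.finrank k ↥(L M) * Module.finrank (↥(L M))
          ↥(IntermediateField.adjoin (↥(L M)) (((T M).image r : Set Ω)))
        ≤ 2 ^ (2 ^ M - 1) * 2 ^ (2 ^ M - 1) :=
          Nat.mul_le_mul (hP8 M).2
            (hAslt.2.trans (Nat.pow_le_pow_right (by norm_num) hcard1))
      _ = 2 ^ ((2 ^ M - 1) + (2 ^ M - 1)) := (pow_add 2 _ _).symm
      _ < 2 ^ (2 ^ (M + 1) - 1) := by
          apply Nat.pow_lt_pow_right (by norm_num)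
          have h1 : 1 ≤ 2 ^ M := Nat.one_le_two_pow
          have h3 : 2 ^ (M + 1) = 2 ^ M * 2 := pow_succ 2 M
          omega
  -- transfer to the splitting field
  have hsplits : ((polyIterate φ (M + 1)).map (algebraMap k Ω)).Splits :=
    IsAlgClosed.splits _
  have hrs : (polyIterate φ (M + 1)).rootSet Ω = ((T (M + 1) : Finset Ω) : Set Ω) := by
    ext x
    rw [Polynomial.mem_rootSet, Finset.mem_coe, hmem]
    simp [(polyIterate_monic hφ (M + 1)).ne_zero]
  have hLeq : L (M + 1) = IntermediateField.adjoin k ((polyIterate φ (M + 1)).rootSet Ω) := by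
    rw [hL, hrs]
  haveI hsf : Polynomial.IsSplittingField k ↥(L (M + 1)) (polyIterate φ (M + 1)) := by
    rw [hLeq]
    exact IntermediateField.adjoin_rootSet_isSplittingField hsplits
  have e : ↥(L (M + 1)) ≃ₐ[k] (polyIterate φ (M + 1)).SplittingField :=
    Polynomial.IsSplittingField.algEquiv _ _
  have hfr : Module.finrank k (polyIterate φ (M + 1)).SplittingField
      = Module.finrank k ↥(L (M + 1)) := e.symm.toLinearEquiv.finrank_eq
  haveI : IsGalois k (polyIterate φ (M + 1)).SplittingField :=
    IsGalois.of_separable_splitting_field (hsep (M + 1) (by omega))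
  refine ⟨M + 1, by omega, ?_⟩
  rw [IsGalois.card_aut_eq_finrank, hfr]
  exact hlt
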